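/- Define the binary relation R′ on F(A) by: R′ u v holds if and only if u is right-positive and v = u·p for some positive p ∈ F(A). Then for every w ∈ F(A), w is related to the identity element 1 by the equivalence relation generated by R′ (its reflexive-symmetric-transitive closure) if and only if w is positive. -/

import Mathlib

namespace PositiveWords

variable {A : Type*} [DecidableEq A]

/-- The degree of a list of letters: +1 for each positive letter, −1 for each inverse letter. -/
def degree (t : List (A × Bool)) : ℤ :=
  (t.map fun p => if p.2 then (1 : ℤ) else -1).sum

/-- A positive element of the free group: every letter of its reduced word is positive. -/
def Positive (w : FreeGroup A) : Prop :=
  ∀ p ∈ w.toWord, p.2 = true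

/-- A right-positive element: every suffix of its reduced word has nonnegative degree. -/
def RightPositive (w : FreeGroup A) : Prop :=
  ∀ s t : List (A × Bool), w.toWord = s ++ t → 0 ≤ degree t

/-- `R' u v` iff `u` is right-positive and `v = u · p` for some positive `p`. -/
def R' (u v : FreeGroup A) : Prop :=
  RightPositive u ∧ ∃ p : FreeGroup A, Positive p ∧ v = u * p

/-- The "no cancellation" relation on adjacent letters. -/
def NC (a b : A × Bool) : Prop := ¬(a.1 = b.1 ∧ a.2 = !b.2)

lemma reduce_eq_self_of_chain' :
    ∀ l : List (A × Bool), List.Chain' NC l → FreeGroup.reduce l = l := by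
  intro l hl
  induction l with
  | nil => rfl
  | cons a l ih =>
    rw [FreeGroup.reduce.cons, ih hl.tail]
    cases l with
    | nil => rfl
    | cons b t =>
      have hnc : NC a b := List.isChain_cons_cons.1 hl |>.1
      simp only [NC] at hnc
      simp [hnc]

lemma chain'_of_no_cancel :
    ∀ l : List (A × Bool),
      (∀ (s t : List (A × Bool)) (x : A) (b : Bool), l ≠ s ++ (x, b) :: (x, !b) :: t) →
      List.Chain' NC l := by
  intro l
  induction l with
  | nil => intro _; simp [List.Chain']
  | cons a l ih =>
    intro h
    cases l with
    | nil => simp [List.Chain']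
    | cons b t =>
      refine List.isChain_cons_cons.2 ⟨?_, ih ?_⟩
      · rintro ⟨h1, h2⟩
        refine h [] t a.1 a.2 ?_
        have : b = (a.1, !a.2) := by
          ext
          · exact h1.symm
          · have := h2
            cases hb : b.2 <;> simp [hb] at this ⊢ <;> simp [this]
        simp [this]
      · intro s t' x bb hst
        exact h (a :: s) t' x bb (by simp [hst])

lemma chain'_toWord (w : FreeGroup A) : List.Chain' NC w.toWord := by
  apply chain'_of_no_cancel
  intro s t x b hst
  have : FreeGroup.reduce w.toWord = s ++ (x, b) :: (x, !b) :: t := by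
    rw [FreeGroup.reduce_toWord, hst]
  exact FreeGroup.reduce.not this

lemma rightPositive_last {w : FreeGroup A} (hw : RightPositive w) :
    ∀ a ∈ w.toWord.getLast?, a.2 = true := by
  intro a ha
  obtain ⟨hne, hl⟩ := List.mem_getLast?_eq_getLast ha
  have hdecomp : w.toWord = w.toWord.dropLast ++ [a] := by
    rw [hl]
    exact (List.dropLast_append_getLast hne).symm
  have := hw _ _ hdecomp
  by_contra hfalse
  simp only [Bool.not_eq_true] at hfalse
  simp only [degree, List.map_cons, List.map_nil, hfalse] at this
  norm_num at this

lemma toWord_mul_of_rightPositive {u p : FreeGroup A}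
    (hu : RightPositive u) (hp : Positive p) :
    (u * p).toWord = u.toWord ++ p.toWord := by
  have hmul : u * p = FreeGroup.mk (u.toWord ++ p.toWord) := by
    conv_lhs => rw [← FreeGroup.mk_toWord (x := u), ← FreeGroup.mk_toWord (x := p)]
    exact FreeGroup.mul_mk
  rw [hmul, FreeGroup.toWord_mk]
  apply reduce_eq_self_of_chain'
  show List.IsChain NC _
  rw [List.isChain_append]
  refine ⟨chain'_toWord u, chain'_toWord p, ?_⟩
  intro x hx y hy
  have hx2 : x.2 = true := rightPositive_last hu x hx
  have hy2 : y.2 = true := hp y (List.mem_of_mem_head? hy)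
  simp [NC, hx2, hy2]

lemma positive_iff_of_R' {u v : FreeGroup A} (h : R' u v) : Positive u ↔ Positive v := by
  obtain ⟨hu, p, hp, rfl⟩ := h
  simp only [Positive, toWord_mul_of_rightPositive hu hp]
  constructor
  · intro h q hq
    rcases List.mem_append.1 hq with hq | hq
    · exact h q hq
    · exact hp q hq
  · intro h q hq
    exact h q (List.mem_append.2 (Or.inl hq))

lemma rightPositive_one : RightPositive (1 : FreeGroup A) := by
  intro s t hst
  rw [FreeGroup.toWord_one] at hst
  obtain ⟨-, ht⟩ := List.append_eq_nil_iff.1 hst.symm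
  simp [ht, degree]

lemma positive_iff_of_eqvGen {x y : FreeGroup A} (h : Relation.EqvGen (R' (A := A)) x y) :
    Positive x ↔ Positive y := by
  induction h with
  | rel a b hab => exact positive_iff_of_R' hab
  | refl a => exact Iff.rfl
  | symm a b _ ih => exact ih.symm
  | trans a b c _ _ ih1 ih2 => exact ih1.trans ih2

/-- `w` is related to `1` by the equivalence relation generated by `R'` iff `w` is positive. -/
theorem eqvGen_one_iff_positive' (w : FreeGroup A) :
    Relation.EqvGen (R' (A := A)) w 1 ↔ Positive w := by
  constructor
  · intro h
    rw [positive_iff_of_eqvGen h]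
    intro q hq
    rw [FreeGroup.toWord_one] at hq
    simp at hq
  · intro hw
    exact (Relation.EqvGen.rel 1 w ⟨rightPositive_one, w, hw, (one_mul w).symm⟩).symm _ _

end PositiveWords
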